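/- If D is a (μ,λ)-regular ultrafilter over I and the topological space X is D-compact, then X is [μ,λ]-compact. -/

import Mathlib

open Cardinal

/-- `X` is `[μ,λ]`-compact: every open cover by at most `lam` sets
has a subcover by fewer than `μ` sets. -/
def CptIn (μ lam : Cardinal) (X : Type) [TopologicalSpace X] : Prop :=
  ∀ 𝒰 : Set (Set X), (∀ U ∈ 𝒰, IsOpen U) → #𝒰 ≤ lam → ⋃₀ 𝒰 = Set.univ →
    ∃ 𝒱 ⊆ 𝒰, #𝒱 < μ ∧ ⋃₀ 𝒱 = Set.univ

/-- `p` is a `D`-limit point of the sequence `x`. -/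
def IsDLimit {I X : Type} [TopologicalSpace X] (D : Ultrafilter I) (x : I → X) (p : X) : Prop :=
  ∀ U : Set X, IsOpen U → p ∈ U → {i | x i ∈ U} ∈ D

/-- `X` is `D`-compact. -/
def DCompact {I : Type} (D : Ultrafilter I) (X : Type) [TopologicalSpace X] : Prop :=
  ∀ x : I → X, ∃ p : X, IsDLimit D x p

/-- `D` is `μ`-complete. -/
def MuComplete {I : Type} (μ : Cardinal) (D : Ultrafilter I) : Prop :=
  ∀ S : Set (Set I), #S < μ → (∀ A ∈ S, A ∈ D) → ⋂₀ S ∈ D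

/-- `D` is `(μ,lam)`-regular: there is a family of `lam`-many members of `D`
every intersection of `μ`-many of which is empty. -/
def RegUF {I : Type} (μ lam : Cardinal) (D : Ultrafilter I) : Prop :=
  ∃ (A : Type) (Z : A → Set I), #A = lam ∧ (∀ a, Z a ∈ D) ∧
    ∀ S : Set A, #S = μ → ⋂ a ∈ S, Z a = ∅

/-- The ordinal space of a cardinal, with the order topology. -/
noncomputable def ordSpace (c : Cardinal) : Type := c.ord.ToType

noncomputable instance (c : Cardinal) : LinearOrder (ordSpace c) :=
  inferInstanceAs (LinearOrder c.ord.ToType)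
noncomputable instance (c : Cardinal) : TopologicalSpace (ordSpace c) := Preorder.topology _
instance (c : Cardinal) : OrderTopology (ordSpace c) := ⟨rfl⟩

theorem stmt12 {I X : Type} [TopologicalSpace X] (μ lam : Cardinal) (D : Ultrafilter I)
    (hreg : RegUF μ lam D) (hX : DCompact D X) : CptIn μ lam X := by
  obtain ⟨A, Z, hA, hZ, hint⟩ := hreg
  have hμ0 : 0 < μ := by
    rcases eq_zero_or_pos μ with h | h
    · exfalso
      have h2 := hint ∅ (by simp [h])
      simp only [Set.mem_empty_iff_false, Set.iInter_of_empty, Set.iInter_univ] at h2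
      have : (∅ : Set I) ∈ D := h2 ▸ D.toFilter.univ_mem
      exact D.toFilter.empty_notMem this
    · exact h
  intro 𝒰 hopen hcard hcover
  by_contra hcon
  push_neg at hcon
  rcases isEmpty_or_nonempty X with hE | hNE
  · refine hcon ∅ (Set.empty_subset _) (by simpa using hμ0) ?_
    simp [Set.eq_empty_of_isEmpty (Set.univ : Set X)]
  -- X nonempty, so 𝒰 is nonempty
  obtain ⟨x0⟩ := hNE
  have hx0 : x0 ∈ ⋃₀ 𝒰 := hcover ▸ Set.mem_univ x0
  obtain ⟨U0, hU0, -⟩ := hx0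
  have h𝒰ne : Nonempty ↥𝒰 := ⟨⟨U0, hU0⟩⟩
  have hle : #↥𝒰 ≤ #A := by rw [hA]; exact hcard
  obtain ⟨g⟩ := Cardinal.le_def _ _ |>.mp hle
  set f : A → ↥𝒰 := Function.invFun g with hf
  have hfsurj : Function.Surjective f := Function.invFun_surjective g.injective
  -- For each i, the set of indices a with i ∈ Z a has cardinality < μ
  have hSi : ∀ i : I, #{a : A | i ∈ Z a} < μ := by
    intro i
    by_contra hge
    push_neg at hge
    obtain ⟨T, hT⟩ := Cardinal.le_mk_iff_exists_set.mp hge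
    set T' : Set A := Subtype.val '' T with hT'
    have hcardT' : #T' = μ := by
      rw [hT', Cardinal.mk_image_eq Subtype.val_injective, hT]
    have hempty := hint T' hcardT'
    have : i ∈ ⋂ a ∈ T', Z a := by
      refine Set.mem_iInter₂.mpr fun a ha => ?_
      obtain ⟨⟨a', ha'⟩, -, rfl⟩ := ha
      exact ha'
    rw [hempty] at this
    exact this
  -- For each i, the corresponding subfamily fails to cover
  have hpick : ∀ i : I, ∃ y : X, y ∉ ⋃₀ ((fun a => (f a : Set X)) '' {a : A | i ∈ Z a}) := by
    intro i
    set 𝒱 := (fun a => (f a : Set X)) '' {a : A | i ∈ Z a} with h𝒱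
    have hsub : 𝒱 ⊆ 𝒰 := by
      rintro V ⟨a, -, rfl⟩; exact (f a).2
    have hlt : #𝒱 < μ := lt_of_le_of_lt (Cardinal.mk_image_le) (hSi i)
    have := hcon 𝒱 hsub hlt
    rw [Set.ne_univ_iff_exists_notMem] at this
    exact this
  choose x hx using hpick
  obtain ⟨p, hp⟩ := hX x
  have hpU : p ∈ ⋃₀ 𝒰 := hcover ▸ Set.mem_univ p
  obtain ⟨U, hU, hpU'⟩ := hpU
  obtain ⟨a, ha⟩ := hfsurj ⟨U, hU⟩
  have h1 : {i | x i ∈ U} ∈ D := hp U (hopen U hU) hpU'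
  have h2 : {i | x i ∈ U} ∩ Z a ∈ D := D.toFilter.inter_mem h1 (hZ a)
  obtain ⟨i, hi1, hi2⟩ := D.toFilter.nonempty_of_mem h2
  refine hx i ⟨U, ⟨a, hi2, ?_⟩, hi1⟩
  simp only [ha]
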